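/- Every finite-dimensional n-plectic vector space (V, ω) contains, for each k with 1 ≤ k ≤ n, a k-Lagrangian subspace. -/

import Mathlib

/-- The `k`-orthogonal complement `W^{⊥,k}` of a subspace `W` with respect to an
alternating `(n+1)`-form `ω`. -/
def kPerp {V : Type*} [AddCommGroup V] [Module ℝ V] {n : ℕ}
    (ω : AlternatingMap ℝ V ℝ (Fin (n + 1))) (W : Submodule ℝ V)
    (k : ℕ) (hk : k ≤ n) : Set V :=
  {v | ∀ w : Fin k → V, (∀ i, w i ∈ W) → ∀ u : Fin (n - k) → V,
    ω (Fin.cons v (Fin.append w u) ∘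
      Fin.cast (show n + 1 = k + (n - k) + 1 by omega)) = 0}

private lemma decomp_aux {V : Type*} (K p : ℕ) (m : Fin (K + p + 1) → V) :
    Fin.cons (m 0) (Fin.append (fun i : Fin K => m ((Fin.castAdd p i).succ))
      (fun i : Fin p => m ((Fin.natAdd K i).succ))) = m := by
  funext j
  refine Fin.cases ?_ (fun j => ?_) j
  · simp
  · refine Fin.addCases (fun i => ?_) (fun i => ?_) j <;> simp

private lemma vanish_aux {V : Type*} [AddCommGroup V] [Module ℝ V] {K p : ℕ}
    (Ω : AlternatingMap ℝ V ℝ (Fin (K + p + 1))) (L : Submodule ℝ V) (v : V)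
    (hL : ∀ m : Fin (K+p+1) → V, (∀ i, i.1 ≤ K → m i ∈ L) → Ω m = 0)
    (hv : ∀ m : Fin (K+p+1) → V, m 0 = v →
      (∀ i : Fin (K+p+1), 1 ≤ i.1 → i.1 ≤ K → m i ∈ L) → Ω m = 0) :
    ∀ m : Fin (K+p+1) → V, (∀ i : Fin (K+p+1), i.1 ≤ K → (m i ∈ L ∨ m i = v)) → Ω m = 0 := by
  intro m hm
  by_cases htwo : ∃ i j : Fin (K+p+1), i ≠ j ∧ i.1 ≤ K ∧ j.1 ≤ K ∧ m i = v ∧ m j = v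
  · obtain ⟨i, j, hij, _, _, hi, hj⟩ := htwo
    exact Ω.map_eq_zero_of_eq m (hi.trans hj.symm) hij
  push_neg at htwo
  by_cases hone : ∃ i : Fin (K+p+1), i.1 ≤ K ∧ m i = v
  · obtain ⟨i, hiK, hiv⟩ := hone
    have hother : ∀ j : Fin (K+p+1), j ≠ i → j.1 ≤ K → m j ∈ L := by
      intro j hji hjK
      rcases hm j hjK with h | h
      · exact h
      · exact absurd hiv (htwo j i hji hjK hiK h)
    by_cases hi0 : i = 0
    · subst hi0
      refine hv m hiv (fun j h1 hK => hother j ?_ hK)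
      intro e; rw [e] at h1; simp at h1
    · have hne : (0 : Fin (K+p+1)) ≠ i := fun e => hi0 e.symm
      have hswap := Ω.map_swap m hne
      have h0 : Ω (m ∘ Equiv.swap 0 i) = 0 := by
        refine hv _ ?_ ?_
        · simp [hiv]
        · intro j h1 hK
          by_cases hj : j = i
          · subst hj
            simp only [Function.comp_apply, Equiv.swap_apply_right]
            exact hother 0 hne (by simp)
          · have hj0 : j ≠ 0 := by intro e; rw [e] at h1; simp at h1
            simp only [Function.comp_apply, Equiv.swap_apply_of_ne_of_ne hj0 hj]
            exact hother j hj hK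
      rw [h0] at hswap
      linarith [hswap]
  · push_neg at hone
    refine hL m (fun i hiK => ?_)
    rcases hm i hiK with h | h
    · exact h
    · exact absurd h (hone i hiK)

private lemma expand_aux {V : Type*} [AddCommGroup V] [Module ℝ V] {K p : ℕ}
    (Ω : AlternatingMap ℝ V ℝ (Fin (K + p + 1))) (L : Submodule ℝ V) (v : V)
    (hbase : ∀ m : Fin (K+p+1) → V,
      (∀ i : Fin (K+p+1), i.1 ≤ K → (m i ∈ L ∨ m i = v)) → Ω m = 0) :
    ∀ m : Fin (K+p+1) → V,
      (∀ i : Fin (K+p+1), i.1 ≤ K → m i ∈ L ⊔ Submodule.span ℝ {v}) → Ω m = 0 := by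
  let P : ℕ → Prop := fun j => ∀ m : Fin (K+p+1) → V,
    (∀ i : Fin (K+p+1), i.1 ≤ K →
      ((i.1 < j → (m i ∈ L ∨ m i = v)) ∧ (j ≤ i.1 → m i ∈ L ⊔ Submodule.span ℝ {v}))) →
    Ω m = 0
  have hPtop : P (K + 1) := by
    intro m hm
    exact hbase m (fun i hiK => (hm i hiK).1 (by omega))
  have hstep : ∀ j : ℕ, P (j + 1) → P j := by
    intro j hP1 m hm
    by_cases hjK : j ≤ K
    · set i0 : Fin (K+p+1) := ⟨j, by omega⟩ with hi0
      have hmem : m i0 ∈ L ⊔ Submodule.span ℝ {v} := (hm i0 hjK).2 (le_refl j)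
      obtain ⟨y, hy, z, hz, hyz⟩ := Submodule.mem_sup.mp hmem
      obtain ⟨t, rfl⟩ := Submodule.mem_span_singleton.mp hz
      have key : ∀ x : V, (x ∈ L ∨ x = v) → Ω (Function.update m i0 x) = 0 := by
        intro x hx
        refine hP1 _ (fun i hiK => ⟨fun hij => ?_, fun hij => ?_⟩)
        · by_cases hii : i = i0
          · subst hii; rw [Function.update_self]; exact hx
          · rw [Function.update_of_ne hii]
            refine (hm i hiK).1 ?_
            have : i.1 ≠ j := fun e => hii (Fin.ext (by simp [hi0, e]))
            omega
        · have hii : i ≠ i0 := fun e => by simp [e, hi0] at hij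
          rw [Function.update_of_ne hii]
          exact (hm i hiK).2 (by omega)
      have hmself : m = Function.update m i0 (y + t • v) := by
        rw [hyz, Function.update_eq_self]
      rw [hmself, Ω.map_update_add, Ω.map_update_smul,
        key y (Or.inl hy), key v (Or.inr rfl)]
      simp
    · refine hP1 m (fun i hiK => ⟨fun _ => (hm i hiK).1 (by omega), fun hcon => absurd hcon (by omega)⟩)
  have hall : ∀ d : ℕ, P (K + 1 - d) := by
    intro d
    induction d with
    | zero => simpa using hPtop
    | succ d ih =>
      by_cases hd : d ≤ K
      · have e : K + 1 - d = (K - d) + 1 := by omega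
        have e2 : K + 1 - (d + 1) = K - d := by omega
        rw [e2]
        rw [e] at ih
        exact hstep _ ih
      · have e : K + 1 - (d + 1) = K + 1 - d := by omega
        rw [e]; exact ih
  have hP0 : P 0 := by
    have := hall (K + 1)
    simpa using this
  intro m hm
  exact hP0 m (fun i hiK => ⟨fun h => absurd h (by omega), fun _ => hm i hiK⟩)

/-- every finite-dimensional `n`-plectic vector space `(V, ω)` contains,
for each `1 ≤ k ≤ n`, a `k`-Lagrangian subspace. -/
theorem exists_kLagrangian
    {V : Type*} [AddCommGroup V] [Module ℝ V] [FiniteDimensional ℝ V] {n : ℕ}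
    (ω : AlternatingMap ℝ V ℝ (Fin (n + 1)))
    (hnondeg : ∀ v : V, (∀ u : Fin n → V, ω (Fin.cons v u) = 0) → v = 0)
    (k : ℕ) (hk1 : 1 ≤ k) (hkn : k ≤ n) :
    ∃ L : Submodule ℝ V, (L : Set V) = kPerp ω L k hkn := by
  classical
  have h : n + 1 = k + (n - k) + 1 := by omega
  set Ω : AlternatingMap ℝ V ℝ (Fin (k + (n - k) + 1)) := ω.domDomCongr (finCongr h) with hΩdef
  have hΩ : ∀ g : Fin (k + (n - k) + 1) → V, Ω g = ω (g ∘ Fin.cast h) := fun _ => rfl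
  set Iso : Submodule ℝ V → Prop :=
    fun L => ∀ m : Fin (k + (n - k) + 1) → V, (∀ i, i.1 ≤ k → m i ∈ L) → Ω m = 0 with hIso
  have hbot : Iso ⊥ := by
    intro m hm
    have h0 : m 0 = 0 := by simpa using hm 0 (by simp)
    exact Ω.map_coord_zero 0 h0
  set A : Set ℕ := {d | ∃ L, Iso L ∧ Module.finrank ℝ L = d} with hA
  have hAne : A.Nonempty := ⟨_, ⊥, hbot, rfl⟩
  have hAbdd : BddAbove A := ⟨Module.finrank ℝ V, fun d hd => by
    obtain ⟨L, _, hL⟩ := hd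
    exact hL ▸ Submodule.finrank_le L⟩
  obtain ⟨L, hLiso, hLrank⟩ := Nat.sSup_mem hAne hAbdd
  refine ⟨L, ?_⟩
  have hmem : ∀ x : V, x ∈ kPerp ω L k hkn ↔
      (∀ m : Fin (k + (n - k) + 1) → V, m 0 = x →
        (∀ i : Fin (k + (n - k) + 1), 1 ≤ i.1 → i.1 ≤ k → m i ∈ L) → Ω m = 0) := by
    intro x
    simp only [kPerp, Set.mem_setOf_eq]
    constructor
    · intro hx m hm0 hmL
      have hd := decomp_aux k (n - k) m
      rw [← hd, hm0, hΩ]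
      refine hx _ (fun i => hmL _ ?_ ?_) _
      · simp
      · have := i.isLt; simp
    · intro hx w hw u
      rw [← hΩ]
      refine hx _ (by simp) ?_
      intro i h1 hK
      obtain ⟨iv, hlt⟩ := i
      cases iv with
      | zero => simp at h1
      | succ j =>
        have hj : j < k := by simpa using hK
        have e1 : (⟨j+1, hlt⟩ : Fin (k + (n-k) + 1)) = Fin.succ ⟨j, by omega⟩ := rfl
        have e2 : (⟨j, by omega⟩ : Fin (k + (n-k))) = Fin.castAdd (n-k) ⟨j, hj⟩ := rfl
        rw [e1, Fin.cons_succ, e2, Fin.append_left]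
        exact hw _
  ext x
  simp only [SetLike.mem_coe]
  constructor
  · intro hxL
    refine (hmem x).mpr ?_
    intro m hm0 hmL
    refine hLiso m (fun i hiK => ?_)
    by_cases hi : (1 : ℕ) ≤ i.1
    · exact hmL i hi hiK
    · have : i = 0 := Fin.ext (by simp only [Fin.val_zero]; omega)
      rw [this, hm0]; exact hxL
  · intro hxk
    have hx := (hmem x).mp hxk
    have hL'iso : Iso (L ⊔ Submodule.span ℝ {x}) :=
      expand_aux Ω L x (vanish_aux Ω L x hLiso hx)
    have hrankle : Module.finrank ℝ ↥(L ⊔ Submodule.span ℝ {x}) ≤ Module.finrank ℝ ↥L := by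
      rw [hLrank]
      exact le_csSup hAbdd ⟨_, hL'iso, rfl⟩
    have heq : L = L ⊔ Submodule.span ℝ {x} :=
      Submodule.eq_of_le_of_finrank_le le_sup_left hrankle
    have hxm : x ∈ L ⊔ Submodule.span ℝ {x} :=
      Submodule.mem_sup_right (Submodule.mem_span_singleton_self x)
    rwa [← heq] at hxm
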